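/- Let m ≥ 1 and let ζ ∈ 𝔽₂^m with c(ζ) = k. If ζ_1 = 1, then there exists γ ∈ Γ_P such that γ(ζ) is the vector whose coordinates equal 1 exactly at the positions 1, 3, 5, …, 2k−1 (i.e. (1,0,1,0,…,1,0,1,0,…,0) with 2k−1 leading alternating entries followed by zeros). If ζ_1 = 0, then there exists γ ∈ Γ_P such that γ(ζ) is the vector whose coordinates equal 1 exactly at the positions 2, 4, …, 2k (i.e. (0,1,0,1,…,0,1,0,…,0) with 2k leading alternating entries followed by zeros). -/

import Mathlib

open scoped Classical

noncomputable section

/-- The `i`-th coordinate (1-indexed) of `ζ ∈ 𝔽₂^m`, interpreted as `0` for `i` out of range. -/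
def padP {m : ℕ} (ζ : Fin m → ZMod 2) (i : ℕ) : ZMod 2 :=
  if h : 1 ≤ i ∧ i ≤ m then ζ ⟨i - 1, by omega⟩ else 0

/-- The transvection `τ^P_j(ζ) = ζ + (ζ_{j-1} + ζ_{j+1}) e_j`. -/
def tauP (m j : ℕ) (ζ : Fin m → ZMod 2) : Fin m → ZMod 2 :=
  fun k => if (k : ℕ) + 1 = j then ζ k + (padP ζ (j - 1) + padP ζ (j + 1)) else ζ k

/-- The group `Γ_P`, generated by the transvections `τ^P_j`, `2 ≤ j ≤ m`. -/
def GammaP (m : ℕ) : Subgroup (Equiv.Perm (Fin m → ZMod 2)) :=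
  Subgroup.closure {g | ∃ j, 2 ≤ j ∧ j ≤ m ∧ ⇑g = tauP m j}
def blockCount {m : ℕ} (ζ : Fin m → ZMod 2) : ℕ :=
  ((Finset.Icc 1 m).filter (fun i => padP ζ i = 1 ∧ padP ζ (i - 1) = 0)).card

lemma padP_coord {m : ℕ} (ζ : Fin m → ZMod 2) (p : Fin m) :
    padP ζ ((p : ℕ) + 1) = ζ p := by
  have h : 1 ≤ (p : ℕ) + 1 ∧ (p : ℕ) + 1 ≤ m := ⟨by omega, by omega⟩
  rw [padP, dif_pos h]
  congr 1

lemma padP_zero {m : ℕ} (ζ : Fin m → ZMod 2) : padP ζ 0 = 0 := by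
  rw [padP, dif_neg (by omega)]

lemma padP_of_gt {m : ℕ} (ζ : Fin m → ZMod 2) {i : ℕ} (h : m < i) : padP ζ i = 0 := by
  rw [padP, dif_neg (by omega)]

lemma padP_range {m : ℕ} {ζ : Fin m → ZMod 2} {i : ℕ} (h : padP ζ i = 1) :
    1 ≤ i ∧ i ≤ m := by
  by_contra hc
  rw [padP, dif_neg hc] at h
  exact absurd h (by decide)

lemma padP_tauP_ne {m j : ℕ} (ζ : Fin m → ZMod 2) {i : ℕ} (h : i ≠ j) :
    padP (tauP m j ζ) i = padP ζ i := by
  rw [padP, padP]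
  split_ifs with h1
  · simp only [tauP]
    rw [if_neg (by omega)]
  · rfl

lemma padP_tauP_self {m j : ℕ} (ζ : Fin m → ZMod 2) (h2 : 2 ≤ j) (hm : j ≤ m) :
    padP (tauP m j ζ) j = padP ζ j + (padP ζ (j - 1) + padP ζ (j + 1)) := by
  have h : 1 ≤ j ∧ j ≤ m := ⟨by omega, hm⟩
  conv_lhs => rw [padP, dif_pos h]
  conv_rhs => rw [padP, dif_pos h]
  simp only [tauP]
  rw [if_pos (by omega)]

lemma tauP_apply {m j : ℕ} (ζ : Fin m → ZMod 2) (k : Fin m) :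
    tauP m j ζ k = if (k : ℕ) + 1 = j then ζ k + (padP ζ (j - 1) + padP ζ (j + 1)) else ζ k :=
  rfl

lemma tauP_invol (m j : ℕ) : Function.Involutive (tauP m j) := by
  intro ζ
  funext k
  show tauP m j (tauP m j ζ) k = ζ k
  rcases Nat.eq_zero_or_pos j with hj | hj
  · subst hj
    rw [tauP_apply (tauP m 0 ζ) k, if_neg (by omega), tauP_apply ζ k, if_neg (by omega)]
  rw [tauP_apply (tauP m j ζ) k,
    padP_tauP_ne ζ (show j - 1 ≠ j by omega), padP_tauP_ne ζ (show j + 1 ≠ j by omega),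
    tauP_apply ζ k]
  by_cases h : (k : ℕ) + 1 = j
  · rw [if_pos h, if_pos h, add_assoc]
    have : ∀ x : ZMod 2, x + x = 0 := by decide
    rw [this, add_zero]
  · rw [if_neg h, if_neg h]

def tperm (m j : ℕ) : Equiv.Perm (Fin m → ZMod 2) :=
  Function.Involutive.toPerm (tauP m j) (tauP_invol m j)

lemma tperm_apply (m j : ℕ) (ζ : Fin m → ZMod 2) : tperm m j ζ = tauP m j ζ := rfl

lemma tperm_mem {m j : ℕ} (h2 : 2 ≤ j) (hm : j ≤ m) : tperm m j ∈ GammaP m :=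
  Subgroup.subset_closure ⟨j, h2, hm, rfl⟩

def bInd {m : ℕ} (ζ : Fin m → ZMod 2) (i : ℕ) : ℕ :=
  if padP ζ i = 1 ∧ padP ζ (i - 1) = 0 then 1 else 0

lemma blockCount_eq_sum {m : ℕ} (ζ : Fin m → ZMod 2) :
    blockCount ζ = ∑ i ∈ Finset.Icc 1 (m + 1), bInd ζ i := by
  rw [blockCount, Finset.card_filter]
  rw [show Finset.Icc 1 (m + 1) = insert (m + 1) (Finset.Icc 1 m) by
    ext x; simp [Finset.mem_Icc]; omega]
  rw [Finset.sum_insert (by simp)]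
  have : bInd ζ (m + 1) = 0 := by
    rw [bInd, if_neg]
    rw [padP_of_gt ζ (by omega)]
    simp
  rw [this, zero_add]
  rfl

lemma sum_split2 {s : Finset ℕ} {f : ℕ → ℕ} {a b : ℕ} (ha : a ∈ s) (hb : b ∈ s) (hab : a ≠ b) :
    ∑ i ∈ s, f i = f a + f b + ∑ i ∈ (s.erase a).erase b, f i := by
  rw [← Finset.add_sum_erase _ _ ha, ← Finset.add_sum_erase _ _ (Finset.mem_erase.mpr ⟨Ne.symm hab, hb⟩)]
  ring

lemma blockCount_tauP {m j : ℕ} (ζ : Fin m → ZMod 2) (h2 : 2 ≤ j) (hm : j ≤ m) :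
    blockCount (tauP m j ζ) = blockCount ζ := by
  rw [blockCount_eq_sum, blockCount_eq_sum]
  have hj : j ∈ Finset.Icc 1 (m + 1) := Finset.mem_Icc.mpr ⟨by omega, by omega⟩
  have hj1 : j + 1 ∈ Finset.Icc 1 (m + 1) := Finset.mem_Icc.mpr ⟨by omega, by omega⟩
  rw [sum_split2 hj hj1 (by omega), sum_split2 hj hj1 (by omega)]
  have hrest : ∑ i ∈ ((Finset.Icc 1 (m+1)).erase j).erase (j+1), bInd (tauP m j ζ) i
      = ∑ i ∈ ((Finset.Icc 1 (m+1)).erase j).erase (j+1), bInd ζ i := by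
    apply Finset.sum_congr rfl
    intro i hi
    have hi1 : i ≠ j + 1 := (Finset.mem_erase.mp hi).1
    have hi2 : i ≠ j := (Finset.mem_erase.mp (Finset.mem_erase.mp hi).2).1
    have hi3 : 1 ≤ i := (Finset.mem_Icc.mp (Finset.mem_erase.mp (Finset.mem_erase.mp hi).2).2).1
    rw [bInd, bInd, padP_tauP_ne ζ hi2, padP_tauP_ne ζ (show i - 1 ≠ j by omega)]
  rw [hrest]
  congr 1
  have e1 : padP (tauP m j ζ) (j - 1) = padP ζ (j - 1) := padP_tauP_ne ζ (by omega)
  have e2 : padP (tauP m j ζ) (j + 1) = padP ζ (j + 1) := padP_tauP_ne ζ (by omega)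
  have e3 : padP (tauP m j ζ) j = padP ζ j + (padP ζ (j - 1) + padP ζ (j + 1)) :=
    padP_tauP_self ζ h2 hm
  rw [bInd, bInd, bInd, bInd, show j + 1 - 1 = j by omega, e1, e2, e3]
  have key : ∀ a b c : ZMod 2,
      (if b + (a + c) = 1 ∧ a = 0 then 1 else 0) + (if c = 1 ∧ b + (a + c) = 0 then 1 else 0)
      = (if b = 1 ∧ a = 0 then 1 else 0) + (if c = 1 ∧ b = 0 then 1 else 0) := by decide
  exact key _ _ _

lemma padP_one_tauP {m j : ℕ} (ζ : Fin m → ZMod 2) (h2 : 2 ≤ j) :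
    padP (tauP m j ζ) 1 = padP ζ 1 :=
  padP_tauP_ne ζ (by omega)

def nval {m : ℕ} (ζ : Fin m → ZMod 2) : ℕ :=
  ∑ i ∈ Finset.Icc 1 m, (padP ζ i).val * 2 ^ i

lemma nval_lt_one {m : ℕ} {η ζ : Fin m → ZMod 2} {j : ℕ} (hj : 1 ≤ j) (hjm : j ≤ m)
    (hne : ∀ i, i ≠ j → padP η i = padP ζ i) (hζ : padP ζ j = 1) (hη : padP η j = 0) :
    nval η < nval ζ := by
  rw [nval, nval]
  have hjs : j ∈ Finset.Icc 1 m := Finset.mem_Icc.mpr ⟨hj, hjm⟩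
  rw [← Finset.add_sum_erase _ _ hjs, ← Finset.add_sum_erase _ (fun i => (padP ζ i).val * 2 ^ i) hjs]
  have : ∑ i ∈ (Finset.Icc 1 m).erase j, (padP η i).val * 2 ^ i
      = ∑ i ∈ (Finset.Icc 1 m).erase j, (padP ζ i).val * 2 ^ i := by
    apply Finset.sum_congr rfl
    intro i hi
    rw [hne i (Finset.mem_erase.mp hi).1]
  rw [this, hζ, hη]
  have h2 : 0 < 2 ^ j := Nat.pow_pos (by omega)
  simp only [ZMod.val_zero, ZMod.val_one, zero_mul, one_mul]
  omega

lemma nval_lt_two {m : ℕ} {η ζ : Fin m → ZMod 2} {p : ℕ} (hp : 3 ≤ p) (hpm : p ≤ m)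
    (hne : ∀ i, i ≠ p - 1 → i ≠ p → padP η i = padP ζ i)
    (hζ1 : padP ζ (p - 1) = 0) (hζ2 : padP ζ p = 1)
    (hη1 : padP η (p - 1) = 1) (hη2 : padP η p = 0) : nval η < nval ζ := by
  rw [nval, nval]
  have ha : p - 1 ∈ Finset.Icc 1 m := Finset.mem_Icc.mpr ⟨by omega, by omega⟩
  have hb : p ∈ Finset.Icc 1 m := Finset.mem_Icc.mpr ⟨by omega, hpm⟩
  rw [sum_split2 ha hb (by omega), sum_split2 ha hb (by omega)]
  have : ∑ i ∈ ((Finset.Icc 1 m).erase (p-1)).erase p, (padP η i).val * 2 ^ i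
      = ∑ i ∈ ((Finset.Icc 1 m).erase (p-1)).erase p, (padP ζ i).val * 2 ^ i := by
    apply Finset.sum_congr rfl
    intro i hi
    rw [hne i (Finset.mem_erase.mp (Finset.mem_erase.mp hi).2).1 (Finset.mem_erase.mp hi).1]
  rw [this, hζ1, hζ2, hη1, hη2]
  simp only [ZMod.val_zero, ZMod.val_one, zero_mul, one_mul]
  have h2 : 2 ^ p = 2 * 2 ^ (p - 1) := by
    rw [← pow_succ']
    congr 1
    omega
  have h3 : 0 < 2 ^ (p - 1) := Nat.pow_pos (by omega)
  omega

def nfFun (m k : ℕ) (b : ZMod 2) : Fin m → ZMod 2 :=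
  if b = 1 then fun p : Fin m => if ((p : ℕ) + 1) % 2 = 1 ∧ (p : ℕ) + 1 ≤ 2 * k - 1 then 1 else 0
  else fun p : Fin m => if ((p : ℕ) + 1) % 2 = 0 ∧ (p : ℕ) + 1 ≤ 2 * k then 1 else 0

lemma zmod2_ne_one {x : ZMod 2} (h : x ≠ 1) : x = 0 := by revert h; revert x; decide

lemma zmod2_ne_zero {x : ZMod 2} (h : x ≠ 0) : x = 1 := by revert h; revert x; decide

lemma normal_of_no_moves {m : ℕ} (ζ : Fin m → ZMod 2)
    (hA : ∀ j, 2 ≤ j → j ≤ m → padP ζ j = 1 → padP ζ (j - 1) = padP ζ (j + 1))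
    (hB : ¬ ∃ p, 3 ≤ p ∧ p ≤ m ∧ padP ζ (p - 2) = 0 ∧ padP ζ (p - 1) = 0 ∧
      padP ζ p = 1 ∧ padP ζ (p + 1) = 0) :
    ζ = nfFun m (blockCount ζ) (padP ζ 1) := by
  -- isolated ones
  have iso0 : ∀ d j, m - j ≤ d → padP ζ j = 1 → padP ζ (j + 1) = 1 → False := by
    intro d
    induction d with
    | zero =>
      intro j hd h1 h2
      have := padP_range h2
      have := padP_range h1
      omega
    | succ d ih =>
      intro j hd h1 h2
      have hr1 := padP_range h1
      have hr2 := padP_range h2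
      have := hA (j + 1) (by omega) (by omega) h2
      rw [show j + 1 - 1 = j by omega, h1] at this
      exact ih (j + 1) (by omega) h2 this.symm
  have iso : ∀ j, padP ζ j = 1 → padP ζ (j + 1) = 0 := by
    intro j h1
    by_contra hc
    exact iso0 m j (by omega) h1 (zmod2_ne_zero hc)
  have isoL : ∀ j, padP ζ j = 1 → padP ζ (j - 1) = 0 := by
    intro j h1
    have hr := padP_range h1
    by_contra hc
    have h2 := zmod2_ne_zero hc
    have := iso (j - 1) h2
    rw [show j - 1 + 1 = j by omega, h1] at this
    exact absurd this (by decide)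
  -- chain down
  have chain : ∀ p, 3 ≤ p → p ≤ m → padP ζ p = 1 → padP ζ (p - 2) = 1 := by
    intro p h3 hpm h1
    by_contra hc
    exact hB ⟨p, h3, hpm, zmod2_ne_one hc, isoL p h1, h1, iso p h1⟩
  -- downward chain
  have L1 : ∀ p, padP ζ p = 1 → ∀ q, 1 ≤ q → q ≤ p → (p - q) % 2 = 0 → padP ζ q = 1 := by
    intro p
    induction p using Nat.strong_induction_on with
    | _ p ih =>
      intro h1 q hq1 hqp hpar
      rcases eq_or_lt_of_le hqp with h | h
      · rwa [← h] at h1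
      · have hr := padP_range h1
        have hq2 : q ≤ p - 2 := by omega
        have h3 : 3 ≤ p := by omega
        have hc := chain p h3 hr.2 h1
        exact ih (p - 2) (by omega) hc q hq1 hq2 (by omega)
  -- parity
  have L2 : ∀ i j, padP ζ i = 1 → padP ζ j = 1 → i % 2 = j % 2 := by
    have key : ∀ i j, i ≤ j → padP ζ i = 1 → padP ζ j = 1 → i % 2 = j % 2 := by
      intro i j hij h1 h2
      by_contra hc
      have hri := padP_range h1
      have hij' : i + 1 ≤ j := by omega
      have := L1 j h2 (i + 1) (by omega) hij' (by omega)
      rw [iso i h1] at this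
      exact absurd this (by decide)
    intro i j h1 h2
    rcases le_total i j with h | h
    · exact key i j h h1 h2
    · exact (key j i h h2 h1).symm
  -- blockCount as count of ones
  have hbc : blockCount ζ = ((Finset.Icc 1 m).filter (fun i => padP ζ i = 1)).card := by
    rw [blockCount]
    congr 1
    apply Finset.filter_congr
    intro i _
    constructor
    · exact fun h => h.1
    · intro h
      exact ⟨h, isoL i h⟩
  by_cases hS : ∀ i, padP ζ i ≠ 1
  · -- all zero
    have hpad1 : padP ζ 1 = 0 := zmod2_ne_one (hS 1)
    have hk : blockCount ζ = 0 := by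
      rw [hbc, Finset.card_eq_zero]
      apply Finset.filter_false_of_mem
      intro i _
      exact hS i
    rw [hk, hpad1, nfFun, if_neg (by decide)]
    funext p
    rw [← padP_coord ζ p]
    have : ¬ (((p : ℕ) + 1) % 2 = 0 ∧ (p : ℕ) + 1 ≤ 2 * 0) := by omega
    rw [if_neg this]
    exact zmod2_ne_one (hS _)
  · push_neg at hS
    obtain ⟨i0, hi0⟩ := hS
    set S := (Finset.Icc 1 m).filter (fun i => padP ζ i = 1) with hSdef
    have hSne : S.Nonempty := by
      refine ⟨i0, Finset.mem_filter.mpr ⟨Finset.mem_Icc.mpr ?_, hi0⟩⟩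
      have := padP_range hi0
      omega
    set T := S.max' hSne with hTdef
    have hTS : T ∈ S := S.max'_mem hSne
    have hT1 : padP ζ T = 1 := (Finset.mem_filter.mp hTS).2
    have hTr := padP_range hT1
    set t : ℕ := 2 - T % 2 with htdef
    have ht12 : t = 1 ∨ t = 2 := by omega
    have htT : t % 2 = T % 2 := by omega
    have htle : t ≤ T := by
      rcases ht12 with h | h
      · omega
      · -- t = 2, T even, T ≥ 1 so T ≥ 2
        omega
    have hpt : padP ζ t = 1 := L1 T hT1 t (by omega) htle (by omega)
    -- membership characterization
    have hmem : ∀ i, 1 ≤ i → i ≤ m → (padP ζ i = 1 ↔ (i % 2 = t % 2 ∧ i ≤ T)) := by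
      intro i h1 h2
      constructor
      · intro h
        refine ⟨by rw [L2 i t h hpt], ?_⟩
        exact S.le_max' i (Finset.mem_filter.mpr ⟨Finset.mem_Icc.mpr ⟨h1, h2⟩, h⟩)
      · intro ⟨hp, hle⟩
        exact L1 T hT1 i h1 hle (by omega)
    -- cardinality of S
    have hScard : S.card = (T - t) / 2 + 1 := by
      have hSeq : S = Finset.image (fun i => t + 2 * i) (Finset.range ((T - t) / 2 + 1)) := by
        ext j
        simp only [hSdef, Finset.mem_filter, Finset.mem_Icc, Finset.mem_image, Finset.mem_range]
        constructor
        · intro ⟨⟨hj1, hj2⟩, hj⟩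
          have := (hmem j hj1 hj2).mp hj
          exact ⟨(j - t) / 2, by omega, by omega⟩
        · intro ⟨i, hi, hij⟩
          have hj1 : 1 ≤ j := by omega
          have hj2 : j ≤ m := by omega
          exact ⟨⟨hj1, hj2⟩, (hmem j hj1 hj2).mpr ⟨by omega, by omega⟩⟩
      rw [hSeq, Finset.card_image_of_injective _ (fun a b hab => by omega), Finset.card_range]
    set k := blockCount ζ with hkdef
    have hkS : k = (T - t) / 2 + 1 := by rw [hbc, hScard]
    have hTk : T = t + 2 * (k - 1) := by omega
    have hk1 : 1 ≤ k := by omega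
    -- final
    rcases ht12 with ht | ht
    · -- t = 1 : padP ζ 1 = 1
      have hpad1 : padP ζ 1 = 1 := by rw [← ht]; exact hpt
      rw [hpad1, nfFun, if_pos rfl]
      funext p
      rw [← padP_coord ζ p]
      set i := (p : ℕ) + 1 with hidef
      have h1 : 1 ≤ i := by omega
      have h2 : i ≤ m := by omega
      by_cases hc : i % 2 = 1 ∧ i ≤ 2 * k - 1
      · rw [if_pos hc]
        exact (hmem i h1 h2).mpr ⟨by omega, by omega⟩
      · rw [if_neg hc]
        by_contra hz
        have := (hmem i h1 h2).mp (zmod2_ne_zero hz)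
        omega
    · -- t = 2 : padP ζ 1 = 0
      have hpad1 : padP ζ 1 = 0 := by
        by_contra hz
        have h1 := zmod2_ne_zero hz
        have := L2 1 t h1 hpt
        omega
      rw [hpad1, nfFun, if_neg (by decide)]
      funext p
      rw [← padP_coord ζ p]
      set i := (p : ℕ) + 1 with hidef
      have h1 : 1 ≤ i := by omega
      have h2 : i ≤ m := by omega
      by_cases hc : i % 2 = 0 ∧ i ≤ 2 * k
      · rw [if_pos hc]
        exact (hmem i h1 h2).mpr ⟨by omega, by omega⟩
      · rw [if_neg hc]
        by_contra hz
        have := (hmem i h1 h2).mp (zmod2_ne_zero hz)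
        omega

lemma zmod2_add_ne {a c : ZMod 2} (h : a ≠ c) : a + c = 1 := by revert h; revert a c; decide

lemma main_lemma (m : ℕ) : ∀ n (ζ : Fin m → ZMod 2), nval ζ = n →
    ∃ γ ∈ GammaP m, γ ζ = nfFun m (blockCount ζ) (padP ζ 1) := by
  intro n
  induction n using Nat.strong_induction_on with
  | _ n ih =>
    intro ζ hn
    by_cases hA : ∀ j, 2 ≤ j → j ≤ m → padP ζ j = 1 → padP ζ (j - 1) = padP ζ (j + 1)
    · by_cases hB : ∃ p, 3 ≤ p ∧ p ≤ m ∧ padP ζ (p - 2) = 0 ∧ padP ζ (p - 1) = 0 ∧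
        padP ζ p = 1 ∧ padP ζ (p + 1) = 0
      · -- type B move
        obtain ⟨p, hp3, hpm, hc2, hc1, hc0, hcp1⟩ := hB
        set ζ' := tauP m (p - 1) ζ with hζ'
        set η := tauP m p ζ' with hη
        have ep1' : padP ζ' (p - 1) = 1 := by
          rw [hζ', padP_tauP_self ζ (by omega) (by omega),
            show p - 1 - 1 = p - 2 by omega, show p - 1 + 1 = p by omega, hc1, hc2, hc0]
          decide
        have epp' : padP ζ' p = padP ζ p := padP_tauP_ne ζ (by omega)
        have epq' : padP ζ' (p + 1) = padP ζ (p + 1) := padP_tauP_ne ζ (by omega)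
        have hep : padP η p = 0 := by
          rw [hη, padP_tauP_self ζ' (by omega) hpm, epp', hc0, ep1', epq', hcp1]
          decide
        have hep1 : padP η (p - 1) = 1 := by
          rw [hη, padP_tauP_ne ζ' (by omega), ep1']
        have hne : ∀ i, i ≠ p - 1 → i ≠ p → padP η i = padP ζ i := by
          intro i h1 h2
          rw [hη, padP_tauP_ne ζ' h2, hζ', padP_tauP_ne ζ h1]
        have hlt : nval η < nval ζ := nval_lt_two hp3 hpm hne hc1 hc0 hep1 hep
        obtain ⟨γ', hγ', he⟩ := ih (nval η) (by omega) η rfl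
        have hbc : blockCount η = blockCount ζ := by
          rw [hη, blockCount_tauP ζ' (by omega) hpm, hζ',
            blockCount_tauP ζ (by omega) (by omega)]
        have hp1 : padP η 1 = padP ζ 1 := by
          rw [hη, padP_one_tauP ζ' (by omega), hζ', padP_one_tauP ζ (by omega)]
        refine ⟨γ' * (tperm m p * tperm m (p - 1)), ?_, ?_⟩
        · exact mul_mem hγ' (mul_mem (tperm_mem (by omega) hpm) (tperm_mem (by omega) (by omega)))
        · have : (γ' * (tperm m p * tperm m (p - 1))) ζ = γ' η := by
            simp only [Equiv.Perm.mul_apply, tperm_apply]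
            rfl
          rw [this, he, hbc, hp1]
      · -- normal form
        refine ⟨1, one_mem _, ?_⟩
        simp only [Equiv.Perm.coe_one, id_eq]
        exact normal_of_no_moves ζ hA hB
    · -- type A move
      push_neg at hA
      obtain ⟨j, hj2, hjm, hj1, hnej⟩ := hA
      set η := tauP m j ζ with hη
      have hep : padP η j = 0 := by
        rw [hη, padP_tauP_self ζ hj2 hjm, hj1, zmod2_add_ne hnej]
        decide
      have hne : ∀ i, i ≠ j → padP η i = padP ζ i := fun i h => padP_tauP_ne ζ h
      have hlt : nval η < nval ζ := nval_lt_one (by omega) hjm hne hj1 hep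
      obtain ⟨γ', hγ', he⟩ := ih (nval η) (by omega) η rfl
      have hbc : blockCount η = blockCount ζ := blockCount_tauP ζ hj2 hjm
      have hp1 : padP η 1 = padP ζ 1 := padP_one_tauP ζ hj2
      refine ⟨γ' * tperm m j, mul_mem hγ' (tperm_mem hj2 hjm), ?_⟩
      have : (γ' * tperm m j) ζ = γ' η := by
        simp only [Equiv.Perm.mul_apply, tperm_apply]
        rfl
      rw [this, he, hbc, hp1]

/-- If `c(ζ) = k` and `ζ_1 = 1` then some `γ ∈ Γ_P` maps `ζ` to the vector with 1's exactly
at positions `1, 3, …, 2k−1`; if `ζ_1 = 0`, to the vector with 1's exactly at positions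
`2, 4, …, 2k`. (Positions are 1-indexed.) -/
theorem GammaP_orbit_normal_form (m : ℕ) (hm : 1 ≤ m) (ζ : Fin m → ZMod 2) (k : ℕ)
    (hk : blockCount ζ = k) :
    (padP ζ 1 = 1 → ∃ γ ∈ GammaP m, γ ζ =
      fun p : Fin m => if ((p : ℕ) + 1) % 2 = 1 ∧ (p : ℕ) + 1 ≤ 2 * k - 1 then 1 else 0) ∧
    (padP ζ 1 = 0 → ∃ γ ∈ GammaP m, γ ζ =
      fun p : Fin m => if ((p : ℕ) + 1) % 2 = 0 ∧ (p : ℕ) + 1 ≤ 2 * k then 1 else 0) := by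
  obtain ⟨γ, hγ, he⟩ := main_lemma m (nval ζ) ζ rfl
  constructor
  · intro h1
    refine ⟨γ, hγ, ?_⟩
    rw [he, hk, h1, nfFun, if_pos rfl]
  · intro h1
    refine ⟨γ, hγ, ?_⟩
    rw [he, hk, h1, nfFun, if_neg (by decide)]
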